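/- arXiv:cs/0202001 — 2 statements merged into one kernel-verified Lean document; each statement's English description precedes it below -/
import Mathlib

section
/- Every XY-stratified program P has a unique stable model, namely its perfect model, and this model is computed by the iterated procedure that initializes counter(0) and repeatedly (1) computes the stable model of the synchronized bistate version syncbi(P) and (2) replaces each old_q relation by the newly computed new_q relation and increments the counter. -/
/-!
# STATEMENT 10

Every XY-stratified program `P` has a unique stable model — namely its perfect
model (for locally stratified programs the unique stable model is by
definition the perfect model) — and this model is computed by the iterated
procedure that initializes `counter(0)` and repeatedly (1) computes the stable
model of the synchronized bistate version `syncbi(P)` and (2) replaces each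
`old_q` relation by the newly computed `new_q` relation and increments the
counter.

The XY-framework (X-rules, Y-rules, exit rules, the bistate version, and
XY-stratification) is as in Statement 9.  The synchronized bistate version at
counter value `t` is formalized as a ground program over `old`/`new` copies of
the (untimed) recursive atoms: the `old` relations computed at the previous
step are stored as facts, exit rules fire only when their constant temporal
argument equals the counter `t` (the added `counter(Iᵣ)` goal), and the
counter value `t` itself reattaches the temporal argument to the computed
`new` relations (the copy-back rules `q(J,X) ← new_q(X), counter(J)`).
-/
/-! ## Ground normal logic programs -/

/-- A ground normal logic-program rule over ground atoms `α`. -/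
structure GRule (α : Type) where
  head : α
  pos : Set α
  neg : Set α

/-- A ground normal logic program. -/
abbrev GProgram (α : Type) := Set (GRule α)

def GRule.Sat {α : Type} (r : GRule α) (M : Set α) : Prop :=
  r.pos ⊆ M → (∀ a ∈ r.neg, a ∉ M) → r.head ∈ M

def IsModel {α : Type} (P : GProgram α) (M : Set α) : Prop := ∀ r ∈ P, r.Sat M

/-- The Gelfond–Lifschitz reduct. -/
def reduct {α : Type} (P : GProgram α) (M : Set α) : GProgram α :=
  {r | ∃ r' ∈ P, (∀ a ∈ r'.neg, a ∉ M) ∧ r = ⟨r'.head, r'.pos, ∅⟩}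

def leastModel {α : Type} (P : GProgram α) : Set α := ⋂₀ {N | IsModel P N}

/-- Gelfond–Lifschitz stable model. -/
def IsStableModel {α : Type} (P : GProgram α) (M : Set α) : Prop :=
  M = leastModel (reduct P M)

/-- A ground program is locally stratified (Przymusinski) when it admits a
level mapping of ground atoms (into the ordinals) such that in each ground
rule the head's level is at least the level of each positive body atom and
strictly greater than the level of each negated body atom. -/
def LocallyStratified {α : Type} (G : GProgram α) : Prop :=
  ∃ ℓ : α → Ordinal.{0}, ∀ r ∈ G,
    (∀ a ∈ r.pos, ℓ a ≤ ℓ r.head) ∧ (∀ a ∈ r.neg, ℓ a < ℓ r.head)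

/-! ## XY-programs -/

/-- Terms: variables and constants. -/
inductive Term (C : Type) where
  | var (v : ℕ)
  | const (c : C)

def Term.eval {C : Type} (ν : ℕ → C) : Term C → C
  | .var v => ν v
  | .const c => c

/-- The temporal argument of an atom: either `T + k` (an offset `k` from the
temporal variable `T` of the rule) or a constant. -/
inductive TTerm : Type where
  | ofs (k : ℕ)
  | const (c : ℕ)
  deriving DecidableEq

def TTerm.eval (τ : ℕ) : TTerm → ℕ
  | .ofs k => τ + k
  | .const c => c

/-- An atom of a (mutually recursive) predicate `p`, with its distinguished
temporal argument `t` and its ordinary arguments `args`. -/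
structure RAtom (P : Type) (arP : P → ℕ) (C : Type) where
  p : P
  t : TTerm
  args : Fin (arP p) → Term C

/-- An atom of an extensional (database) predicate. -/
structure EAtom (E : Type) (arE : E → ℕ) (C : Type) where
  e : E
  args : Fin (arE e) → Term C

/-- A rule of an XY-program: a head and positive/negative recursive
(`posR`/`negR`) and extensional (`posE`/`negE`) body atoms. -/
structure XYRule (P E : Type) (arP : P → ℕ) (arE : E → ℕ) (C : Type) where
  head : RAtom P arP C
  posR : List (RAtom P arP C)
  negR : List (RAtom P arP C)
  posE : List (EAtom E arE C)
  negE : List (EAtom E arE C)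

/-- An X-rule: the temporal argument of every recursive body goal equals that
of the head. -/
def XYRule.IsXRule {P E : Type} {arP : P → ℕ} {arE : E → ℕ} {C : Type}
    (r : XYRule P E arP arE C) : Prop :=
  ∃ h : ℕ, r.head.t = .ofs h ∧ ∀ a ∈ r.posR ++ r.negR, a.t = .ofs h

/-- A Y-rule: the temporal argument of some recursive body goals is one less
than that of the head (via the successor `J+1`), the others being equal to
it. -/
def XYRule.IsYRule {P E : Type} {arP : P → ℕ} {arE : E → ℕ} {C : Type}
    (r : XYRule P E arP arE C) : Prop :=
  ∃ h : ℕ, r.head.t = .ofs (h + 1) ∧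
    (∀ a ∈ r.posR ++ r.negR, a.t = .ofs h ∨ a.t = .ofs (h + 1)) ∧
    ∃ a ∈ r.posR ++ r.negR, a.t = .ofs h

/-- An exit rule: the head's temporal argument is a constant and the body has
no recursive goals. -/
def XYRule.IsExitRule {P E : Type} {arP : P → ℕ} {arE : E → ℕ} {C : Type}
    (r : XYRule P E arP arE C) : Prop :=
  (∃ c, r.head.t = .const c) ∧ r.posR = [] ∧ r.negR = []

/-- An XY-program: every rule is an X-rule, a Y-rule, or an exit rule. -/
def IsXYProgram {P E : Type} {arP : P → ℕ} {arE : E → ℕ} {C : Type}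
    (Pr : List (XYRule P E arP arE C)) : Prop :=
  ∀ r ∈ Pr, r.IsXRule ∨ r.IsYRule ∨ r.IsExitRule

/-! ## The bistate version -/

/-- Predicates of the bistate version: `new`/`old` copies (`true` = `new`) of
the recursive predicates, plus the extensional predicates. -/
abbrev BiPred (P E : Type) := (Bool × P) ⊕ E

def biar {P E : Type} (arP : P → ℕ) (arE : E → ℕ) : BiPred P E → ℕ :=
  Sum.elim (fun bp => arP bp.2) arE

/-- A non-ground atom of an ordinary (non-temporal) normal program. -/
structure NAtom (Q : Type) (arQ : Q → ℕ) (C : Type) where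
  q : Q
  args : Fin (arQ q) → Term C

/-- A non-ground rule of an ordinary normal program. -/
structure NRule (Q : Type) (arQ : Q → ℕ) (C : Type) where
  head : NAtom Q arQ C
  pos : List (NAtom Q arQ C)
  neg : List (NAtom Q arQ C)

/-- The bistate version of an XY-rule: head predicates get prefix `new`; a
recursive body predicate gets prefix `new` if its temporal argument equals the
head's, and `old` otherwise; temporal arguments are dropped. -/
def XYRule.bistate {P E : Type} {arP : P → ℕ} {arE : E → ℕ} {C : Type}
    (r : XYRule P E arP arE C) : NRule (BiPred P E) (biar arP arE) C where
  head := ⟨Sum.inl (true, r.head.p), r.head.args⟩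
  pos := (r.posR.map fun a =>
            (⟨Sum.inl (decide (a.t = r.head.t), a.p), a.args⟩ :
              NAtom (BiPred P E) (biar arP arE) C)) ++
         r.posE.map fun a => ⟨Sum.inr a.e, a.args⟩
  neg := (r.negR.map fun a =>
            (⟨Sum.inl (decide (a.t = r.head.t), a.p), a.args⟩ :
              NAtom (BiPred P E) (biar arP arE) C)) ++
         r.negE.map fun a => ⟨Sum.inr a.e, a.args⟩

/-- A stratification of an ordinary normal program. -/
def NStratifiedBy {Q : Type} {arQ : Q → ℕ} {C : Type}
    (Pr : List (NRule Q arQ C)) (σ : Q → ℕ) : Prop :=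
  ∀ r ∈ Pr, (∀ a ∈ r.pos, σ a.q ≤ σ r.head.q) ∧ (∀ a ∈ r.neg, σ a.q < σ r.head.q)

/-- An XY-program is XY-stratified when its bistate version is a stratified
program. -/
def XYStratified {P E : Type} {arP : P → ℕ} {arE : E → ℕ} {C : Type}
    (Pr : List (XYRule P E arP arE C)) : Prop :=
  IsXYProgram Pr ∧ ∃ σ : BiPred P E → ℕ, NStratifiedBy (Pr.map XYRule.bistate) σ

/-! ## Ground instantiation of an XY-program -/

/-- Ground atoms: timed ground atoms of the recursive predicates, and ground
atoms of the extensional predicates. -/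
abbrev GXAtom (P E : Type) (arP : P → ℕ) (arE : E → ℕ) (C : Type) :=
  (Σ p : P, ℕ × (Fin (arP p) → C)) ⊕ (Σ e : E, Fin (arE e) → C)

def RAtom.ground {P E : Type} {arP : P → ℕ} {arE : E → ℕ} {C : Type}
    (a : RAtom P arP C) (τ : ℕ) (ν : ℕ → C) : GXAtom P E arP arE C :=
  Sum.inl ⟨a.p, (a.t.eval τ, fun i => (a.args i).eval ν)⟩

def EAtom.ground {P E : Type} {arP : P → ℕ} {arE : E → ℕ} {C : Type}
    (a : EAtom E arE C) (ν : ℕ → C) : GXAtom P E arP arE C :=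
  Sum.inr ⟨a.e, fun i => (a.args i).eval ν⟩

/-- The ground instantiation of an XY-program `Pr` over the extensional
database `edb` (`τ` is the value of the temporal variable, `ν` the values of
the ordinary variables). -/
def groundXY {P E : Type} {arP : P → ℕ} {arE : E → ℕ} {C : Type}
    (Pr : List (XYRule P E arP arE C)) (edb : Set (Σ e : E, Fin (arE e) → C)) :
    GProgram (GXAtom P E arP arE C) :=
  {r | ∃ e ∈ edb, r = ⟨Sum.inr e, ∅, ∅⟩} ∪
  {r | ∃ rl ∈ Pr, ∃ τ : ℕ, ∃ ν : ℕ → C,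
        r = ⟨rl.head.ground τ ν,
             {x | ∃ a ∈ rl.posR, x = a.ground τ ν} ∪
               {x | ∃ a ∈ rl.posE, x = a.ground ν},
             {x | ∃ a ∈ rl.negR, x = a.ground τ ν} ∪
               {x | ∃ a ∈ rl.negE, x = a.ground ν}⟩}

/-! ## The synchronized bistate program of one step of the procedure -/

/-- Untimed ground atoms of the recursive predicates. -/
abbrev BAtom (P : Type) (arP : P → ℕ) (C : Type) := Σ p : P, Fin (arP p) → C

/-- Ground atoms of one step of the iterated procedure: `old`/`new` copies
(`true` = `new`) of the untimed recursive atoms, plus extensional atoms. -/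
abbrev StepAtom (P E : Type) (arP : P → ℕ) (arE : E → ℕ) (C : Type) :=
  (Bool × BAtom P arP C) ⊕ (Σ e : E, Fin (arE e) → C)

/-- The ground synchronized bistate program executed at counter value `t`,
with `O` the contents of the `old` relations (the `new` relations of the
previous step): extensional facts, `old` facts from `O`, and the ground
bistate instances of the rules whose head falls at time `t` (in particular an
exit rule fires only when its constant temporal argument is `t`). -/
def stepProg {P E : Type} {arP : P → ℕ} {arE : E → ℕ} {C : Type}
    (Pr : List (XYRule P E arP arE C)) (edb : Set (Σ e : E, Fin (arE e) → C))
    (t : ℕ) (O : Set (BAtom P arP C)) : GProgram (StepAtom P E arP arE C) :=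
  {r | ∃ e ∈ edb, r = ⟨Sum.inr e, ∅, ∅⟩} ∪
  {r | ∃ b ∈ O, r = ⟨Sum.inl (false, b), ∅, ∅⟩} ∪
  {r | ∃ rl ∈ Pr, (∃ τ : ℕ, rl.head.t.eval τ = t) ∧ ∃ ν : ℕ → C,
        r = ⟨Sum.inl (true, ⟨rl.head.p, fun i => (rl.head.args i).eval ν⟩),
             {x | ∃ a ∈ rl.posR,
                x = Sum.inl (decide (a.t = rl.head.t),
                      ⟨a.p, fun i => (a.args i).eval ν⟩)} ∪
               {x | ∃ a ∈ rl.posE, x = Sum.inr ⟨a.e, fun i => (a.args i).eval ν⟩},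
             {x | ∃ a ∈ rl.negR,
                x = Sum.inl (decide (a.t = rl.head.t),
                      ⟨a.p, fun i => (a.args i).eval ν⟩)} ∪
               {x | ∃ a ∈ rl.negE, x = Sum.inr ⟨a.e, fun i => (a.args i).eval ν⟩}⟩}

/-- The contents of the `old` relations at step `t` of a run producing the
`new` relations `N`: empty at step `0`, `N (t-1)` afterwards. -/
def oldAt {P : Type} {arP : P → ℕ} {C : Type}
    (N : ℕ → Set (BAtom P arP C)) : ℕ → Set (BAtom P arP C)
  | 0 => ∅
  | t + 1 => N t

/-- Reassembling the timed model from the per-step `new` relations (the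
copy-back rules `q(J,X) ← new_q(X), counter(J)`), together with the database. -/
def assemble {P E : Type} {arP : P → ℕ} {arE : E → ℕ} {C : Type}
    (N : ℕ → Set (BAtom P arP C)) (edb : Set (Σ e : E, Fin (arE e) → C)) :
    Set (GXAtom P E arP arE C) :=
  {x | ∃ t : ℕ, ∃ b : BAtom P arP C, b ∈ N t ∧ x = Sum.inl ⟨b.1, (t, b.2)⟩} ∪
  {x | ∃ e ∈ edb, x = Sum.inr e}

/-! ## Auxiliary: basic facts about least models, reducts and stable models -/

section Basics

variable {α : Type}

theorem leastModel_subset {G : GProgram α} {N : Set α} (h : IsModel G N) :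
    leastModel G ⊆ N :=
  Set.sInter_subset_of_mem h

theorem isModel_leastModel_definite {G : GProgram α} (hdef : ∀ r ∈ G, r.neg = ∅) :
    IsModel G (leastModel G) := by
  intro r hr hpos _
  intro N hN
  exact hN r hr (hpos.trans (Set.sInter_subset_of_mem hN))
    (by rw [hdef r hr]; intro a ha; exact absurd ha (Set.notMem_empty a))

theorem reduct_definite (G : GProgram α) (M : Set α) :
    ∀ r ∈ reduct G M, r.neg = ∅ := by
  rintro r ⟨r', _, _, rfl⟩; rfl

theorem isModel_leastModel_reduct (G : GProgram α) (M : Set α) :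
    IsModel (reduct G M) (leastModel (reduct G M)) :=
  isModel_leastModel_definite (reduct_definite G M)

theorem stable_isModel_reduct {G : GProgram α} {M : Set α} (h : IsStableModel G M) :
    IsModel (reduct G M) M := by
  have h2 := isModel_leastModel_reduct G M
  rwa [← h] at h2

theorem stable_leastModel_reduct_subset {G : GProgram α} {M : Set α}
    (h : IsStableModel G M) {N : Set α} (hN : IsModel (reduct G M) N) : M ⊆ N := by
  rw [h]; exact leastModel_subset hN

theorem stable_isModel {G : GProgram α} {M : Set α} (h : IsStableModel G M) :
    IsModel G M := by
  intro r hr hpos hneg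
  exact stable_isModel_reduct h ⟨r.head, r.pos, ∅⟩ ⟨r, hr, hneg, rfl⟩ hpos
    (fun a ha => absurd ha (Set.notMem_empty a))

theorem stable_fact_mem {G : GProgram α} {M : Set α} (h : IsStableModel G M)
    {a : α} (hf : (⟨a, ∅, ∅⟩ : GRule α) ∈ G) : a ∈ M :=
  stable_isModel h _ hf (Set.empty_subset M) (fun x hx => absurd hx (Set.notMem_empty x))

theorem stable_mem_head {G : GProgram α} {M : Set α} (h : IsStableModel G M)
    {x : α} (hx : x ∈ M) : ∃ r ∈ G, r.head = x := by
  by_contra hc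
  push_neg at hc
  have hmod : IsModel (reduct G M) (M \ {x}) := by
    rintro r ⟨r', hr', hneg, rfl⟩ hpos _
    refine ⟨stable_isModel_reduct h _ ⟨r', hr', hneg, rfl⟩
      (hpos.trans Set.diff_subset) (fun a ha => absurd ha (Set.notMem_empty a)), ?_⟩
    simpa using hc r' hr'
  exact (stable_leastModel_reduct_subset h hmod hx).2 rfl

end Basics

/-! ## Auxiliary: stratified ground programs have a unique stable model -/

section Stratified

variable {α : Type}

theorem leastModel_reduct_head {P : GProgram α} {M : Set α} {r : GRule α}
    (hr : r ∈ P) (hneg : ∀ a ∈ r.neg, a ∉ M)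
    (hpos : r.pos ⊆ leastModel (reduct P M)) :
    r.head ∈ leastModel (reduct P M) :=
  isModel_leastModel_reduct P M ⟨r.head, r.pos, ∅⟩ ⟨r, hr, hneg, rfl⟩ hpos
    (fun a ha => absurd ha (Set.notMem_empty a))

theorem stable_head_mem {G : GProgram α} {M : Set α} (h : IsStableModel G M)
    {r : GRule α} (hr : r ∈ G) (hpos : r.pos ⊆ M) (hneg : ∀ a ∈ r.neg, a ∉ M) :
    r.head ∈ M :=
  stable_isModel h r hr hpos hneg

/-- The cumulative bottom-up construction of the perfect model. -/
def cum (G : GProgram α) (ℓ : α → ℕ) : ℕ → Set α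
  | 0 => ∅
  | n + 1 => leastModel (reduct {r ∈ G | ℓ r.head ≤ n} (cum G ℓ n))

variable {G : GProgram α} {ℓ : α → ℕ}
  (hstrat : ∀ r ∈ G, (∀ a ∈ r.pos, ℓ a ≤ ℓ r.head) ∧ (∀ a ∈ r.neg, ℓ a < ℓ r.head))

include hstrat in
theorem cum_Q : ∀ n, cum G ℓ n ⊆ cum G ℓ (n + 1) ∧
    ∀ a ∈ cum G ℓ (n + 1), ℓ a < n → a ∈ cum G ℓ n := by
  intro n
  induction n with
  | zero =>
    constructor
    · intro a ha; exact absurd ha (Set.notMem_empty a)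
    · intro a _ h; omega
  | succ n ih =>
    constructor
    · -- cum (n+1) ⊆ cum (n+2)
      show leastModel _ ⊆ _
      apply leastModel_subset
      rintro r ⟨r', ⟨hrG, hle⟩, hneg, rfl⟩ hpos _
      refine leastModel_reduct_head (r := r') ⟨hrG, by omega⟩ ?_ hpos
      intro a ha hmem
      have hlt : ℓ a < n := lt_of_lt_of_le ((hstrat r' hrG).2 a ha) hle
      exact hneg a ha (ih.2 a hmem hlt)
    · -- restriction
      intro a ha hlt
      have hmod : IsModel (reduct {r ∈ G | ℓ r.head ≤ n + 1} (cum G ℓ (n + 1)))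
          (cum G ℓ (n + 1) ∪ {b | n + 1 ≤ ℓ b}) := by
        rintro r ⟨r', ⟨hrG, hle⟩, hneg, rfl⟩ hpos _
        rcases Nat.lt_or_ge (ℓ r'.head) (n + 1) with hh | hh
        · left
          refine leastModel_reduct_head (r := r') ⟨hrG, by omega⟩ ?_ ?_
          · intro b hb hmem
            exact hneg b hb (ih.1 hmem)
          · intro b hb
            have hble : ℓ b ≤ ℓ r'.head := (hstrat r' hrG).1 b hb
            rcases hpos hb with h | h
            · exact h
            · exfalso; have h' : n + 1 ≤ ℓ b := h; omega
        · right; exact hh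
      have := leastModel_subset hmod ha
      rcases this with h | h
      · exact h
      · exfalso; have h' : n + 1 ≤ ℓ a := h; omega

include hstrat in
theorem cum_mono : ∀ {m n : ℕ}, m ≤ n → cum G ℓ m ⊆ cum G ℓ n := by
  intro m n h
  induction h with
  | refl => exact subset_rfl
  | step _ ih => exact ih.trans (cum_Q hstrat _).1

include hstrat in
theorem cum_restrict : ∀ {m n : ℕ}, m ≤ n → ∀ a ∈ cum G ℓ n, ℓ a < m → a ∈ cum G ℓ m := by
  intro m n h
  induction h with
  | refl => exact fun a ha _ => ha
  | @step n' h ih =>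
    intro a ha hlt
    exact ih a ((cum_Q hstrat n').2 a ha (lt_of_lt_of_le hlt h)) hlt

/-- The perfect model of a (ℕ-)stratified ground program. -/
def perfect (G : GProgram α) (ℓ : α → ℕ) : Set α := {a | a ∈ cum G ℓ (ℓ a + 1)}

include hstrat in
theorem cum_subset_perfect (n : ℕ) : cum G ℓ n ⊆ perfect G ℓ := by
  intro a ha
  show a ∈ cum G ℓ (ℓ a + 1)
  rcases le_or_gt n (ℓ a + 1) with h | h
  · exact cum_mono hstrat h ha
  · exact cum_restrict hstrat (by omega) a ha (by omega)

include hstrat in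
theorem perfect_stable : IsStableModel G (perfect G ℓ) := by
  apply Set.Subset.antisymm
  · -- perfect ⊆ leastModel (reduct G perfect)
    intro a ha
    have key : ∀ n, cum G ℓ n ⊆ leastModel (reduct G (perfect G ℓ)) := by
      intro n
      cases n with
      | zero => intro b hb; exact absurd hb (Set.notMem_empty b)
      | succ n =>
        show leastModel _ ⊆ _
        apply leastModel_subset
        rintro r ⟨r', ⟨hrG, hle⟩, hneg, rfl⟩ hpos _
        refine leastModel_reduct_head (r := r') hrG ?_ hpos
        intro b hb hmem
        have hblt : ℓ b < ℓ r'.head := (hstrat r' hrG).2 b hb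
        have hmem' : b ∈ cum G ℓ (ℓ b + 1) := hmem
        exact hneg b hb (cum_mono hstrat (by omega) hmem')
    exact key (ℓ a + 1) ha
  · -- leastModel (reduct G perfect) ⊆ perfect
    apply leastModel_subset
    rintro r ⟨r', hrG, hneg, rfl⟩ hpos _
    apply cum_subset_perfect hstrat (ℓ r'.head + 1)
    show r'.head ∈ leastModel (reduct {r ∈ G | ℓ r.head ≤ ℓ r'.head} (cum G ℓ (ℓ r'.head)))
    refine leastModel_reduct_head (r := r') ⟨hrG, le_refl _⟩ ?_ ?_
    · intro b hb hmem
      exact hneg b hb (cum_subset_perfect hstrat _ hmem)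
    · intro b hb
      have hble : ℓ b ≤ ℓ r'.head := (hstrat r' hrG).1 b hb
      have hb' : b ∈ cum G ℓ (ℓ b + 1) := hpos hb
      have hb'' : b ∈ cum G ℓ (ℓ r'.head + 1) := cum_mono hstrat (by omega) hb'
      exact hb''

include hstrat in
theorem stable_unique {M₁ M₂ : Set α} (h₁ : IsStableModel G M₁) (h₂ : IsStableModel G M₂) :
    M₁ = M₂ := by
  have key : ∀ n, ∀ a, ℓ a < n → (a ∈ M₁ ↔ a ∈ M₂) := by
    intro n
    induction n with
    | zero => intro a ha; omega
    | succ n ih =>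
      have half : ∀ (A B : Set α), IsStableModel G A → IsStableModel G B →
          (∀ a, ℓ a < n → (a ∈ A ↔ a ∈ B)) → ∀ a, ℓ a < n + 1 → a ∈ A → a ∈ B := by
        intro A B hA hB hAB a hlt haA
        have hmod : IsModel (reduct G A) (B ∪ {b | n + 1 ≤ ℓ b}) := by
          rintro r ⟨r', hrG, hneg, rfl⟩ hpos _
          rcases Nat.lt_or_ge (ℓ r'.head) (n + 1) with hh | hh
          · left
            refine stable_head_mem hB (r := r') hrG ?_ ?_
            · intro b hb
              have hble : ℓ b ≤ ℓ r'.head := (hstrat r' hrG).1 b hb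
              rcases hpos hb with h | h
              · exact h
              · exfalso; have h' : n + 1 ≤ ℓ b := h; omega
            · intro b hb hmem
              have : ℓ b < n := by have := (hstrat r' hrG).2 b hb; omega
              exact hneg b hb ((hAB b this).mpr hmem)
          · right; exact hh
        have := stable_leastModel_reduct_subset hA hmod haA
        rcases this with h | h
        · exact h
        · exfalso; have h' : n + 1 ≤ ℓ a := h; omega
      intro a hlt
      exact ⟨half M₁ M₂ h₁ h₂ ih a hlt, half M₂ M₁ h₂ h₁ (fun b hb => (ih b hb).symm) a hlt⟩
  ext a
  exact key (ℓ a + 1) a (by omega)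

include hstrat in
theorem existsUnique_stable : ∃! M, IsStableModel G M :=
  ⟨perfect G ℓ, perfect_stable hstrat, fun M hM => stable_unique hstrat hM (perfect_stable hstrat)⟩

end Stratified

/-! ## Auxiliary: the ground instantiation of an XY-stratified program is stratified -/

section GroundStrat

theorem le_foldr_max {l : List ℕ} {x : ℕ} (h : x ∈ l) : x ≤ l.foldr max 0 := by
  induction l with
  | nil => simp at h
  | cons y t ih =>
    rcases List.mem_cons.mp h with h | h
    · subst h; exact le_max_left _ _
    · exact le_trans (ih h) (le_max_right _ _)

variable {P E : Type} {arP : P → ℕ} {arE : E → ℕ} {C : Type}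

theorem time_case {Pr : List (XYRule P E arP arE C)} (hXY : IsXYProgram Pr)
    {rl : XYRule P E arP arE C} (hrl : rl ∈ Pr) {a : RAtom P arP C}
    (ha : a ∈ rl.posR ++ rl.negR) :
    a.t = rl.head.t ∨ ∃ h, a.t = TTerm.ofs h ∧ rl.head.t = TTerm.ofs (h + 1) := by
  rcases hXY rl hrl with ⟨h, hh, hb⟩ | ⟨h, hh, hb, -⟩ | ⟨-, hp, hn⟩
  · left; rw [hb a ha, hh]
  · rcases hb a ha with h1 | h1
    · right; exact ⟨h, h1, hh⟩
    · left; rw [h1, hh]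
  · rw [hp, hn] at ha; simp at ha

theorem ofs_ne_succ {h : ℕ} : TTerm.ofs h ≠ TTerm.ofs (h + 1) := by
  intro hc
  have := TTerm.ofs.inj hc
  omega

theorem groundXY_stratified (Pr : List (XYRule P E arP arE C)) (hxy : XYStratified Pr)
    (edb : Set (Σ e : E, Fin (arE e) → C)) :
    ∃ ℓ : GXAtom P E arP arE C → ℕ, ∀ r ∈ groundXY Pr edb,
      (∀ a ∈ r.pos, ℓ a ≤ ℓ r.head) ∧ (∀ a ∈ r.neg, ℓ a < ℓ r.head) := by
  obtain ⟨hXY, σ, hσ⟩ := hxy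
  set S : ℕ := (Pr.map fun rl => σ (Sum.inl (true, rl.head.p))).foldr max 0 with hS
  refine ⟨Sum.elim (fun s => s.2.1 * (S + 1) + min (σ (Sum.inl (true, s.1))) S)
      (fun s => min (σ (Sum.inr s.1)) S), ?_⟩
  rintro r (⟨e, he, rfl⟩ | ⟨rl, hrl, τ, ν, rfl⟩)
  · constructor <;> (intro a ha; exact absurd ha (Set.notMem_empty a))
  · have hheadS : σ (Sum.inl (true, rl.head.p)) ≤ S :=
      le_foldr_max (List.mem_map_of_mem hrl)
    have hσrl := hσ rl.bistate (List.mem_map_of_mem (f := XYRule.bistate) hrl)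
    -- abbreviations
    set hq : BiPred P E := Sum.inl (true, rl.head.p) with hhq
    have hmin_head : min (σ hq) S = σ hq := min_eq_left hheadS
    -- weak inequality for positive recursive atoms, strict for negative ones
    constructor
    · rintro x (⟨a, ha, rfl⟩ | ⟨a, ha, rfl⟩)
      · -- positive recursive atom
        show (a.t.eval τ) * (S + 1) + min (σ (Sum.inl (true, a.p))) S ≤
          (rl.head.t.eval τ) * (S + 1) + min (σ hq) S
        rcases time_case hXY hrl (List.mem_append_left _ ha) with heq | ⟨h, h1, h2⟩
        · -- same time
          have hmem : (⟨Sum.inl (decide (a.t = rl.head.t), a.p), a.args⟩ :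
              NAtom (BiPred P E) (biar arP arE) C) ∈ rl.bistate.pos :=
            List.mem_append_left _ (List.mem_map_of_mem ha)
          have hle : σ (Sum.inl (decide (a.t = rl.head.t), a.p)) ≤ σ hq := hσrl.1 _ hmem
          rw [decide_eq_true heq] at hle
          rw [heq]
          exact Nat.add_le_add_left (min_le_min hle (le_refl S)) _
        · -- previous time
          rw [h1, h2]
          show (τ + h) * (S + 1) + _ ≤ (τ + (h + 1)) * (S + 1) + _
          have e1 : (τ + (h + 1)) * (S + 1) = (τ + h) * (S + 1) + (S + 1) := by ring
          calc (τ + h) * (S + 1) + min (σ (Sum.inl (true, a.p))) S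
              ≤ (τ + h) * (S + 1) + S := Nat.add_le_add_left (min_le_right _ _) _
            _ ≤ (τ + h) * (S + 1) + (S + 1) := Nat.add_le_add_left (Nat.le_succ S) _
            _ = (τ + (h + 1)) * (S + 1) := e1.symm
            _ ≤ (τ + (h + 1)) * (S + 1) + min (σ hq) S := Nat.le_add_right _ _
      · -- positive extensional atom
        show min (σ (Sum.inr a.e)) S ≤ (rl.head.t.eval τ) * (S + 1) + min (σ hq) S
        have hmem : (⟨Sum.inr a.e, a.args⟩ :
            NAtom (BiPred P E) (biar arP arE) C) ∈ rl.bistate.pos :=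
          List.mem_append_right _ (List.mem_map_of_mem ha)
        have hle : σ (Sum.inr a.e) ≤ σ hq := hσrl.1 _ hmem
        exact le_trans (min_le_min hle (le_refl S)) (Nat.le_add_left _ _)
    · rintro x (⟨a, ha, rfl⟩ | ⟨a, ha, rfl⟩)
      · -- negative recursive atom
        show (a.t.eval τ) * (S + 1) + min (σ (Sum.inl (true, a.p))) S <
          (rl.head.t.eval τ) * (S + 1) + min (σ hq) S
        rcases time_case hXY hrl (List.mem_append_right _ ha) with heq | ⟨h, h1, h2⟩
        · have hmem : (⟨Sum.inl (decide (a.t = rl.head.t), a.p), a.args⟩ :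
              NAtom (BiPred P E) (biar arP arE) C) ∈ rl.bistate.neg :=
            List.mem_append_left _ (List.mem_map_of_mem ha)
          have hlt : σ (Sum.inl (decide (a.t = rl.head.t), a.p)) < σ hq := hσrl.2 _ hmem
          rw [decide_eq_true heq] at hlt
          rw [heq]
          apply Nat.add_lt_add_left
          calc min (σ (Sum.inl (true, a.p))) S ≤ σ (Sum.inl (true, a.p)) := min_le_left _ _
            _ < σ hq := hlt
            _ = min (σ hq) S := hmin_head.symm
        · rw [h1, h2]
          show (τ + h) * (S + 1) + _ < (τ + (h + 1)) * (S + 1) + _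
          have e1 : (τ + (h + 1)) * (S + 1) = (τ + h) * (S + 1) + (S + 1) := by ring
          calc (τ + h) * (S + 1) + min (σ (Sum.inl (true, a.p))) S
              ≤ (τ + h) * (S + 1) + S := Nat.add_le_add_left (min_le_right _ _) _
            _ < (τ + h) * (S + 1) + (S + 1) := Nat.add_lt_add_left (Nat.lt_succ_self S) _
            _ = (τ + (h + 1)) * (S + 1) := e1.symm
            _ ≤ (τ + (h + 1)) * (S + 1) + min (σ hq) S := Nat.le_add_right _ _
      · -- negative extensional atom
        show min (σ (Sum.inr a.e)) S < (rl.head.t.eval τ) * (S + 1) + min (σ hq) S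
        have hmem : (⟨Sum.inr a.e, a.args⟩ :
            NAtom (BiPred P E) (biar arP arE) C) ∈ rl.bistate.neg :=
          List.mem_append_right _ (List.mem_map_of_mem ha)
        have hlt : σ (Sum.inr a.e) < σ hq := hσrl.2 _ hmem
        calc min (σ (Sum.inr a.e)) S ≤ σ (Sum.inr a.e) := min_le_left _ _
          _ < σ hq := hlt
          _ = min (σ hq) S := hmin_head.symm
          _ ≤ (rl.head.t.eval τ) * (S + 1) + min (σ hq) S := Nat.le_add_left _ _

end GroundStrat

/-! ## Auxiliary: membership facts for `assemble` and `stepProg` -/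

section Steps

variable {P E : Type} {arP : P → ℕ} {arE : E → ℕ} {C : Type}

theorem mem_assemble_inl {N : ℕ → Set (BAtom P arP C)} {edb : Set (Σ e : E, Fin (arE e) → C)}
    {t : ℕ} {b : BAtom P arP C} :
    (Sum.inl ⟨b.1, (t, b.2)⟩ : GXAtom P E arP arE C) ∈ assemble N edb ↔ b ∈ N t := by
  constructor
  · rintro (⟨t', b', hb', heq⟩ | ⟨e, _, heq⟩)
    · have h2 := Sum.inl.inj heq
      obtain ⟨p, f⟩ := b
      obtain ⟨p', f'⟩ := b'
      injection h2 with hp hrest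
      subst hp
      have h3 : (t, f) = (t', f') := eq_of_heq hrest
      injection h3 with ht hf
      subst ht; subst hf
      exact hb'
    · exact absurd heq (by simp)
  · intro h
    exact Or.inl ⟨t, b, h, rfl⟩

theorem mem_assemble_inr {N : ℕ → Set (BAtom P arP C)} {edb : Set (Σ e : E, Fin (arE e) → C)}
    {e : Σ e : E, Fin (arE e) → C} :
    (Sum.inr e : GXAtom P E arP arE C) ∈ assemble N edb ↔ e ∈ edb := by
  constructor
  · rintro (⟨t', b', _, heq⟩ | ⟨e', he', heq⟩)
    · exact absurd heq (by simp)
    · have h2 := Sum.inr.inj heq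
      subst h2
      exact he'
  · intro h
    exact Or.inr ⟨e, h, rfl⟩

variable {Pr : List (XYRule P E arP arE C)} {edb : Set (Σ e : E, Fin (arE e) → C)}
  {t : ℕ} {O : Set (BAtom P arP C)} {Ms : Set (StepAtom P E arP arE C)}

theorem step_inr_iff (hst : IsStableModel (stepProg Pr edb t O) Ms)
    {e : Σ e : E, Fin (arE e) → C} : (Sum.inr e : StepAtom P E arP arE C) ∈ Ms ↔ e ∈ edb := by
  constructor
  · intro h
    obtain ⟨r, hr, hhead⟩ := stable_mem_head hst h
    rcases hr with (⟨e', he', rfl⟩ | ⟨b, _, rfl⟩) | ⟨rl, _, _, ν, rfl⟩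
    · have h2 : (Sum.inr e' : StepAtom P E arP arE C) = Sum.inr e := hhead
      exact Sum.inr.inj h2 ▸ he'
    · exact absurd hhead (by simp)
    · exact absurd hhead (by simp)
  · intro h
    exact stable_fact_mem hst (Or.inl (Or.inl ⟨e, h, rfl⟩))

theorem step_old_iff (hst : IsStableModel (stepProg Pr edb t O) Ms)
    {b : BAtom P arP C} : (Sum.inl (false, b) : StepAtom P E arP arE C) ∈ Ms ↔ b ∈ O := by
  constructor
  · intro h
    obtain ⟨r, hr, hhead⟩ := stable_mem_head hst h
    rcases hr with (⟨e', _, rfl⟩ | ⟨b', hb', rfl⟩) | ⟨rl, _, _, ν, rfl⟩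
    · exact absurd hhead (by simp)
    · have h2 : (Sum.inl (false, b') : StepAtom P E arP arE C) = Sum.inl (false, b) := hhead
      have h3 := Sum.inl.inj h2
      injection h3 with h4a h4
      subst h4
      exact hb'
    · have h2 : (Sum.inl (true, ⟨rl.head.p, fun i => (rl.head.args i).eval ν⟩) :
          StepAtom P E arP arE C) = Sum.inl (false, b) := hhead
      have h3 := Sum.inl.inj h2
      injection h3 with h4 h5
      exact absurd h4 (by simp)
  · intro h
    exact stable_fact_mem hst (Or.inl (Or.inr ⟨b, h, rfl⟩))

theorem step_new_mem (hst : IsStableModel (stepProg Pr edb t O) Ms)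
    {rl : XYRule P E arP arE C} (hrl : rl ∈ Pr) (hτ : ∃ τ : ℕ, rl.head.t.eval τ = t)
    (ν : ℕ → C)
    (hpos : ({x | ∃ a ∈ rl.posR,
        x = Sum.inl (decide (a.t = rl.head.t), ⟨a.p, fun i => (a.args i).eval ν⟩)} ∪
        {x | ∃ a ∈ rl.posE, x = Sum.inr ⟨a.e, fun i => (a.args i).eval ν⟩} :
          Set (StepAtom P E arP arE C)) ⊆ Ms)
    (hneg : ∀ x ∈ ({x | ∃ a ∈ rl.negR,
        x = Sum.inl (decide (a.t = rl.head.t), ⟨a.p, fun i => (a.args i).eval ν⟩)} ∪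
        {x | ∃ a ∈ rl.negE, x = Sum.inr ⟨a.e, fun i => (a.args i).eval ν⟩} :
          Set (StepAtom P E arP arE C)), x ∉ Ms) :
    (Sum.inl (true, ⟨rl.head.p, fun i => (rl.head.args i).eval ν⟩) :
      StepAtom P E arP arE C) ∈ Ms :=
  stable_isModel hst _ (Or.inr ⟨rl, hrl, hτ, ν, rfl⟩) hpos hneg

end Steps

/-- Every XY-stratified program `P` (over any extensional
database) has a unique stable model — its perfect model — and every run of the
iterated procedure (start with `counter(0)`; repeatedly compute a stable model
of the synchronized bistate version, copy `new` into `old`, increment the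
counter) assembles exactly to this stable model. -/
theorem xy_stratified_unique_stable_model_and_iterated_computation
    {P E C : Type} {arP : P → ℕ} {arE : E → ℕ}
    (Pr : List (XYRule P E arP arE C)) (hxy : XYStratified Pr)
    (edb : Set (Σ e : E, Fin (arE e) → C)) :
    (∃! M, IsStableModel (groundXY Pr edb) M) ∧
    ∀ (N : ℕ → Set (BAtom P arP C)) (Ms : ℕ → Set (StepAtom P E arP arE C)),
      (∀ t, IsStableModel (stepProg Pr edb t (oldAt N t)) (Ms t) ∧
        N t = {b | Sum.inl (true, b) ∈ Ms t}) →
      IsStableModel (groundXY Pr edb) (assemble N edb) := by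
  obtain ⟨ℓ, hℓ⟩ := groundXY_stratified Pr hxy edb
  have hXY : IsXYProgram Pr := hxy.1
  refine ⟨existsUnique_stable hℓ, ?_⟩
  intro N Ms hrun
  have hstep : ∀ t, IsStableModel (stepProg Pr edb t (oldAt N t)) (Ms t) := fun t => (hrun t).1
  have hNdef : ∀ (t : ℕ) (b : BAtom P arP C),
      b ∈ N t ↔ (Sum.inl (true, b) : StepAtom P E arP arE C) ∈ Ms t := by
    intro t b
    constructor
    · intro h; rw [(hrun t).2] at h; exact h
    · intro h; rw [(hrun t).2]; exact h
  have hold : ∀ (t : ℕ) (b : BAtom P arP C),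
      (Sum.inl (false, b) : StepAtom P E arP arE C) ∈ Ms t ↔ b ∈ oldAt N t :=
    fun t _ => step_old_iff (hstep t)
  have hedbMs : ∀ (t : ℕ) (e : Σ e : E, Fin (arE e) → C),
      (Sum.inr e : StepAtom P E arP arE C) ∈ Ms t ↔ e ∈ edb :=
    fun t _ => step_inr_iff (hstep t)
  have holdAt : ∀ (t : ℕ) (b : BAtom P arP C), b ∈ oldAt N t → ∃ s, t = s + 1 ∧ b ∈ N s := by
    intro t b hb
    cases t with
    | zero => exact absurd hb (Set.notMem_empty b)
    | succ s => exact ⟨s, rfl, hb⟩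
  apply Set.Subset.antisymm
  · -- assemble ⊆ leastModel (reduct (groundXY) (assemble))
    intro x hx
    refine Set.mem_sInter.mpr ?_
    intro Nmod hNmod
    have hedbNmod : ∀ e ∈ edb, (Sum.inr e : GXAtom P E arP arE C) ∈ Nmod :=
      fun e he => hNmod ⟨Sum.inr e, ∅, ∅⟩ ⟨⟨Sum.inr e, ∅, ∅⟩, Or.inl ⟨e, he, rfl⟩,
        (fun a ha => absurd ha (Set.notMem_empty a)), rfl⟩ (Set.empty_subset _)
        (fun a ha => absurd ha (Set.notMem_empty a))
    have main : ∀ t, ∀ b ∈ N t, (Sum.inl ⟨b.1, (t, b.2)⟩ : GXAtom P E arP arE C) ∈ Nmod := by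
      intro t
      induction t using Nat.strong_induction_on with
      | _ t IH =>
        intro b hb
        have hWmod : IsModel (reduct (stepProg Pr edb t (oldAt N t)) (Ms t))
            {x : StepAtom P E arP arE C |
              (∃ e, x = Sum.inr e ∧ (Sum.inr e : GXAtom P E arP arE C) ∈ Nmod) ∨
              (∃ b' : BAtom P arP C, x = Sum.inl (true, b') ∧
                (Sum.inl ⟨b'.1, (t, b'.2)⟩ : GXAtom P E arP arE C) ∈ Nmod) ∨
              (∃ (b' : BAtom P arP C) (s : ℕ), x = Sum.inl (false, b') ∧ t = s + 1 ∧
                (Sum.inl ⟨b'.1, (s, b'.2)⟩ : GXAtom P E arP arE C) ∈ Nmod)} := by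
          rintro r ⟨r', hr', hnegMs, rfl⟩ hpos -
          rcases hr' with (⟨e, he, rfl⟩ | ⟨bo, hbo, rfl⟩) | ⟨rl, hrl, ⟨τ, hτ⟩, ν, rfl⟩
          · exact Or.inl ⟨e, rfl, hedbNmod e he⟩
          · obtain ⟨s, hts, hbs⟩ := holdAt t bo hbo
            exact Or.inr (Or.inr ⟨bo, s, rfl, hts, IH s (by omega) bo hbs⟩)
          · -- instance rule: use the corresponding ground rule in the reduct of groundXY
            have hg : (⟨rl.head.ground τ ν,
                {x | ∃ a ∈ rl.posR, x = a.ground τ ν} ∪ {x | ∃ a ∈ rl.posE, x = a.ground ν},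
                {x | ∃ a ∈ rl.negR, x = a.ground τ ν} ∪ {x | ∃ a ∈ rl.negE, x = a.ground ν}⟩ :
                  GRule (GXAtom P E arP arE C)) ∈ groundXY Pr edb :=
              Or.inr ⟨rl, hrl, τ, ν, rfl⟩
            have hgneg : ∀ x ∈ ({x | ∃ a ∈ rl.negR, x = a.ground τ ν} ∪
                {x | ∃ a ∈ rl.negE, x = a.ground ν} : Set (GXAtom P E arP arE C)),
                x ∉ assemble N edb := by
              rintro x (⟨a, haR, rfl⟩ | ⟨a, haE, rfl⟩)
              · intro hmem
                have hmem' : (⟨a.p, fun i => (a.args i).eval ν⟩ : BAtom P arP C) ∈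
                    N (a.t.eval τ) := mem_assemble_inl.mp hmem
                have hnotin := hnegMs
                  (Sum.inl (decide (a.t = rl.head.t), ⟨a.p, fun i => (a.args i).eval ν⟩))
                  (Or.inl ⟨a, haR, rfl⟩)
                rcases time_case hXY hrl (List.mem_append_right _ haR) with heq | ⟨h, h1, h2⟩
                · rw [decide_eq_true heq] at hnotin
                  have heval : a.t.eval τ = t := by rw [heq]; exact hτ
                  rw [heval] at hmem'
                  exact hnotin ((hNdef t _).mp hmem')
                · have hne : a.t ≠ rl.head.t := by rw [h1, h2]; exact ofs_ne_succ
                  rw [decide_eq_false hne] at hnotin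
                  have ht' : t = (τ + h) + 1 := by rw [← hτ, h2]; rfl
                  have heval : a.t.eval τ = τ + h := by rw [h1]; rfl
                  rw [heval] at hmem'
                  apply hnotin
                  rw [hold t, ht']
                  exact hmem'
              · intro hmem
                exact hnegMs (Sum.inr ⟨a.e, fun i => (a.args i).eval ν⟩)
                  (Or.inr ⟨a, haE, rfl⟩) ((hedbMs t _).mpr (mem_assemble_inr.mp hmem))
            have hgpos : ({x | ∃ a ∈ rl.posR, x = a.ground τ ν} ∪
                {x | ∃ a ∈ rl.posE, x = a.ground ν} : Set (GXAtom P E arP arE C)) ⊆ Nmod := by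
              rintro x (⟨a, haR, rfl⟩ | ⟨a, haE, rfl⟩)
              · have hw := hpos (Or.inl ⟨a, haR, rfl⟩)
                rcases time_case hXY hrl (List.mem_append_left _ haR) with heq | ⟨h, h1, h2⟩
                · rw [decide_eq_true heq] at hw
                  rcases hw with ⟨e, hx, -⟩ | ⟨b', hx, hmem⟩ | ⟨b', s, hx, -, -⟩
                  · exact absurd hx (by simp)
                  · have h3 := Sum.inl.inj hx
                    injection h3 with h4 h5
                    subst h5
                    have heval : a.t.eval τ = t := by rw [heq]; exact hτ
                    show (Sum.inl ⟨a.p, (a.t.eval τ, fun i => (a.args i).eval ν)⟩ :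
                      GXAtom P E arP arE C) ∈ Nmod
                    rw [heval]
                    exact hmem
                  · have h3 := Sum.inl.inj hx
                    injection h3 with h4 h5
                    exact absurd h4 (by simp)
                · have hne : a.t ≠ rl.head.t := by rw [h1, h2]; exact ofs_ne_succ
                  rw [decide_eq_false hne] at hw
                  rcases hw with ⟨e, hx, -⟩ | ⟨b', hx, hmem⟩ | ⟨b', s, hx, hts, hmem⟩
                  · exact absurd hx (by simp)
                  · have h3 := Sum.inl.inj hx
                    injection h3 with h4 h5
                    exact absurd h4 (by simp)
                  · have h3 := Sum.inl.inj hx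
                    injection h3 with h4 h5
                    subst h5
                    have ht' : t = (τ + h) + 1 := by rw [← hτ, h2]; rfl
                    have hs : a.t.eval τ = s := by rw [h1]; show τ + h = s; omega
                    show (Sum.inl ⟨a.p, (a.t.eval τ, fun i => (a.args i).eval ν)⟩ :
                      GXAtom P E arP arE C) ∈ Nmod
                    rw [hs]
                    exact hmem
              · have hw := hpos (Or.inr ⟨a, haE, rfl⟩)
                rcases hw with ⟨e, hx, hmem⟩ | ⟨b', hx, -⟩ | ⟨b', s, hx, -, -⟩
                · have h3 := Sum.inr.inj hx
                  subst h3
                  exact hmem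
                · exact absurd hx (by simp)
                · exact absurd hx (by simp)
            refine Or.inr (Or.inl ⟨⟨rl.head.p, fun i => (rl.head.args i).eval ν⟩, rfl, ?_⟩)
            have hh := hNmod ⟨rl.head.ground τ ν,
                {x | ∃ a ∈ rl.posR, x = a.ground τ ν} ∪ {x | ∃ a ∈ rl.posE, x = a.ground ν}, ∅⟩
              ⟨_, hg, hgneg, rfl⟩ hgpos (fun a ha => absurd ha (Set.notMem_empty a))
            have hh' : (Sum.inl ⟨rl.head.p, (rl.head.t.eval τ, fun i => (rl.head.args i).eval ν)⟩ :
                GXAtom P E arP arE C) ∈ Nmod := hh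
            rw [hτ] at hh'
            exact hh'
        have hsub := stable_leastModel_reduct_subset (hstep t) hWmod
        have hbW := hsub ((hNdef t b).mp hb)
        rcases hbW with ⟨e, hx, -⟩ | ⟨b', hx, hmem⟩ | ⟨b', s, hx, -, -⟩
        · exact absurd hx (by simp)
        · have h3 := Sum.inl.inj hx
          injection h3 with h4 h5
          subst h5
          exact hmem
        · have h3 := Sum.inl.inj hx
          injection h3 with h4 h5
          exact absurd h4 (by simp)
    rcases hx with ⟨t, b, hb, rfl⟩ | ⟨e, he, rfl⟩
    · exact main t b hb
    · exact hedbNmod e he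
  · -- leastModel (reduct (groundXY) (assemble)) ⊆ assemble
    apply leastModel_subset
    rintro r ⟨g, hg, hnegM, rfl⟩ hpos -
    rcases hg with ⟨e, he, rfl⟩ | ⟨rl, hrl, τ, ν, rfl⟩
    · exact Or.inr ⟨e, he, rfl⟩
    · have hspos : ({x | ∃ a ∈ rl.posR,
          x = Sum.inl (decide (a.t = rl.head.t), ⟨a.p, fun i => (a.args i).eval ν⟩)} ∪
          {x | ∃ a ∈ rl.posE, x = Sum.inr ⟨a.e, fun i => (a.args i).eval ν⟩} :
            Set (StepAtom P E arP arE C)) ⊆ Ms (rl.head.t.eval τ) := by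
        rintro x (⟨a, haR, rfl⟩ | ⟨a, haE, rfl⟩)
        · have hgm := hpos (Or.inl ⟨a, haR, rfl⟩)
          have hmem' : (⟨a.p, fun i => (a.args i).eval ν⟩ : BAtom P arP C) ∈
              N (a.t.eval τ) := mem_assemble_inl.mp hgm
          rcases time_case hXY hrl (List.mem_append_left _ haR) with heq | ⟨h, h1, h2⟩
          · rw [decide_eq_true heq]
            refine (hNdef _ _).mp ?_
            have heval : a.t.eval τ = rl.head.t.eval τ := by rw [heq]
            rwa [heval] at hmem'
          · have hne : a.t ≠ rl.head.t := by rw [h1, h2]; exact ofs_ne_succ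
            rw [decide_eq_false hne]
            refine (hold _ _).mpr ?_
            have hheval : rl.head.t.eval τ = (τ + h) + 1 := by rw [h2]; rfl
            have heval : a.t.eval τ = τ + h := by rw [h1]; rfl
            rw [hheval]
            rw [heval] at hmem'
            exact hmem'
        · exact (hedbMs _ _).mpr (mem_assemble_inr.mp (hpos (Or.inr ⟨a, haE, rfl⟩)))
      have hsneg : ∀ x ∈ ({x | ∃ a ∈ rl.negR,
          x = Sum.inl (decide (a.t = rl.head.t), ⟨a.p, fun i => (a.args i).eval ν⟩)} ∪
          {x | ∃ a ∈ rl.negE, x = Sum.inr ⟨a.e, fun i => (a.args i).eval ν⟩} :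
            Set (StepAtom P E arP arE C)), x ∉ Ms (rl.head.t.eval τ) := by
        rintro x (⟨a, haR, rfl⟩ | ⟨a, haE, rfl⟩) hxMs
        · rcases time_case hXY hrl (List.mem_append_right _ haR) with heq | ⟨h, h1, h2⟩
          · rw [decide_eq_true heq] at hxMs
            have hbN : (⟨a.p, fun i => (a.args i).eval ν⟩ : BAtom P arP C) ∈
                N (a.t.eval τ) := by
              have heval : a.t.eval τ = rl.head.t.eval τ := by rw [heq]
              rw [heval]
              exact (hNdef _ _).mpr hxMs
            exact hnegM _ (Or.inl ⟨a, haR, rfl⟩) (mem_assemble_inl.mpr hbN)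
          · have hne : a.t ≠ rl.head.t := by rw [h1, h2]; exact ofs_ne_succ
            rw [decide_eq_false hne] at hxMs
            have hoa := (hold _ _).mp hxMs
            have hheval : rl.head.t.eval τ = (τ + h) + 1 := by rw [h2]; rfl
            rw [hheval] at hoa
            have hbN : (⟨a.p, fun i => (a.args i).eval ν⟩ : BAtom P arP C) ∈
                N (a.t.eval τ) := by
              have heval : a.t.eval τ = τ + h := by rw [h1]; rfl
              rw [heval]
              exact hoa
            exact hnegM _ (Or.inl ⟨a, haR, rfl⟩) (mem_assemble_inl.mpr hbN)
        · exact hnegM _ (Or.inr ⟨a, haE, rfl⟩)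
            (mem_assemble_inr.mpr ((hedbMs _ _).mp hxMs))
      have hh := step_new_mem (hstep (rl.head.t.eval τ)) hrl ⟨τ, rfl⟩ ν hspos hsneg
      exact mem_assemble_inl.mpr ((hNdef _ _).mpr hh)
end

section
/- The company-control program—control(C,C) ← owns(C,_,_); control(Onr,C) ← towns(Onr,C,Per), Per > 50; towns(Onr,C2, msum⟨Per⟩) ← control(Onr,C1), owns(C1,C2,Per), where msum is the monotonic running-sum aggregate returning the partial sum after each new element—correctly computes transitive corporate control: each pair (Onr,C2) contributes the shares owns(C1,C2,Per) of each company C1 controlled by Onr exactly once to towns, and control(Onr,C) holds iff Onr transitively owns more than 50% of C's shares; since msum is monotonic, the program is computed by the standard semi-naive fixpoint without stratification restrictions. -/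
/-!
# STATEMENT 15

The company-control program

  `control(C,C)  ← owns(C,_,_).`
  `control(Onr,C) ← towns(Onr,C,Per), Per > 50.`
  `towns(Onr,C2, msum⟨Per⟩) ← control(Onr,C1), owns(C1,C2,Per).`

where `msum` is the monotonic running-sum aggregate returning the partial sum
after each new element, correctly computes transitive corporate control:

* each pair `(Onr,C2)` contributes the shares `owns(C1,C2,Per)` of each
  company `C1` controlled by `Onr` exactly once to `towns` (the running sums
  are the sums over *sets* of contributing companies `C1`, each counted once);
* `control(Onr,C)` holds iff `Onr` transitively owns more than `50%` of `C`'s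
  shares;
* since `msum` is monotonic, the program is computed by the standard
  semi-naive fixpoint, without stratification restrictions: its least model is
  the union of the Kleene iterates of its (monotone) immediate-consequence
  operator.

`owns c1 c2` states that corporation `c1` owns `pct c1 c2` percent of the
shares of `c2` (percentages are nonnegative).  The `msum` aggregate in the
recursive `towns` rule produces, for each group `(Onr,C2)`, the partial sums
of the percentages of the companies `C1` already known to be controlled by
`Onr`, each distinct `C1` contributing exactly once; these partial sums are
the sums over nonempty finite sets of contributing companies.
-/

/-- Ground atoms of the company-control program. -/
inductive CCAtom (C : Type) : Type where
  | control (o c : C)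
  | towns (o c : C) (s : ℚ)

/-- The immediate-consequence operator of the company-control program, with
the monotonic `msum` aggregate in the recursive `towns` rule: a running sum
`towns(o,c2,s)` is derivable when `s` is the sum of the percentages of a
nonempty set `T` of companies, each currently controlled by `o` and each
owning shares of `c2` (each contributing company counted exactly once). -/
def ccStep {C : Type} (owns : C → C → Prop) (pct : C → C → ℚ)
    (M : Set (CCAtom C)) : Set (CCAtom C) :=
  {a | ∃ c c2, owns c c2 ∧ a = CCAtom.control c c} ∪
  {a | ∃ o c s, CCAtom.towns o c s ∈ M ∧ s > 50 ∧ a = CCAtom.control o c} ∪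
  {a | ∃ o, ∃ c2, ∃ T : Finset C, T.Nonempty ∧
        (∀ c1 ∈ T, CCAtom.control o c1 ∈ M ∧ owns c1 c2) ∧
        a = CCAtom.towns o c2 (∑ c1 ∈ T, pct c1 c2)}

/-- Least pre-fixpoint (= least fixpoint, for a monotone operator). -/
def lfpSet {α : Type} (F : Set α → Set α) : Set α := ⋂₀ {S | F S ⊆ S}

/-- The intended meaning: the one-step operator of transitive corporate
control.  `(o,c)` is in a step when `o = c` has some outgoing ownership, or
when the combined percentage of `c`'s shares owned by the companies already
transitively controlled by `o` exceeds `50%`. -/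
def tcStep {C : Type} [Fintype C] (owns : C → C → Prop) (pct : C → C → ℚ)
    (S : Set (C × C)) : Set (C × C) :=
  {p | (∃ c2, owns p.1 c2) ∧ p.1 = p.2} ∪
  {p | ∃ T : Finset C, (∀ c1, c1 ∈ T ↔ (p.1, c1) ∈ S ∧ owns c1 p.2) ∧
        50 < ∑ c1 ∈ T, pct c1 p.2}

section auxlemmas

variable {α : Type}

lemma lfpSet_le {F : Set α → Set α} {S : Set α} (h : F S ⊆ S) :
    lfpSet F ⊆ S := Set.sInter_subset_of_mem h

lemma lfpSet_prefix {F : Set α → Set α} (hM : Monotone F) :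
    F (lfpSet F) ⊆ lfpSet F := by
  intro a ha
  refine Set.mem_sInter.2 fun S hS => ?_
  exact hS (hM (lfpSet_le hS) ha)

lemma lfpSet_fixed {F : Set α → Set α} (hM : Monotone F) :
    F (lfpSet F) = lfpSet F :=
  subset_antisymm (lfpSet_prefix hM) (lfpSet_le (hM (lfpSet_prefix hM)))

end auxlemmas

lemma ccStep_mono {C : Type} (owns : C → C → Prop) (pct : C → C → ℚ) :
    Monotone (ccStep owns pct) := by
  intro M N hMN a ha
  rcases ha with (h | h) | h
  · exact Or.inl (Or.inl h)
  · obtain ⟨o, c, s, hm, hs, rfl⟩ := h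
    exact Or.inl (Or.inr ⟨o, c, s, hMN hm, hs, rfl⟩)
  · obtain ⟨o, c2, T, hT, hall, rfl⟩ := h
    exact Or.inr ⟨o, c2, T, hT,
      fun c1 h1 => ⟨hMN (hall c1 h1).1, (hall c1 h1).2⟩, rfl⟩

lemma tcStep_mono {C : Type} [Fintype C] (owns : C → C → Prop) (pct : C → C → ℚ)
    (hpos : ∀ c1 c2, owns c1 c2 → 0 ≤ pct c1 c2) :
    Monotone (tcStep owns pct) := by
  classical
  intro S S' hSS p hp
  rcases hp with h | h
  · exact Or.inl h
  · obtain ⟨T, hT, hsum⟩ := h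
    refine Or.inr ⟨Finset.univ.filter (fun c1 => (p.1, c1) ∈ S' ∧ owns c1 p.2),
      fun c1 => by simp, ?_⟩
    refine lt_of_lt_of_le hsum (Finset.sum_le_sum_of_subset_of_nonneg ?_ ?_)
    · intro c1 h1
      have h2 := (hT c1).1 h1
      simp only [Finset.mem_filter, Finset.mem_univ, true_and]
      exact ⟨hSS h2.1, h2.2⟩
    · intro c1 h1 _
      have := (Finset.mem_filter.1 h1).2.2
      exact hpos _ _ this

lemma ccIter_mono {C : Type} (owns : C → C → Prop) (pct : C → C → ℚ) :
    Monotone (fun n => (ccStep owns pct)^[n] (∅ : Set (CCAtom C))) := by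
  apply monotone_nat_of_le_succ
  intro n
  induction n with
  | zero => exact Set.empty_subset _
  | succ n ih =>
    rw [Function.iterate_succ_apply', Function.iterate_succ_apply']
    exact ccStep_mono owns pct ih

lemma ccKleene {C : Type} (owns : C → C → Prop) (pct : C → C → ℚ) :
    lfpSet (ccStep owns pct) = ⋃ n : ℕ, (ccStep owns pct)^[n] (∅ : Set (CCAtom C)) := by
  classical
  set F := ccStep owns pct with hF
  apply subset_antisymm
  · apply lfpSet_le
    intro a ha
    rcases ha with (h | h) | h
    · refine Set.mem_iUnion.2 ⟨1, ?_⟩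
      exact Or.inl (Or.inl h)
    · obtain ⟨o, c, s, hm, hs, rfl⟩ := h
      obtain ⟨n, hn⟩ := Set.mem_iUnion.1 hm
      refine Set.mem_iUnion.2 ⟨n + 1, ?_⟩
      rw [Function.iterate_succ_apply']
      exact Or.inl (Or.inr ⟨o, c, s, hn, hs, rfl⟩)
    · obtain ⟨o, c2, T, hT, hall, rfl⟩ := h
      have hex : ∀ c1 ∈ T, ∃ n, CCAtom.control o c1 ∈ F^[n] ∅ := fun c1 h1 =>
        Set.mem_iUnion.1 (hall c1 h1).1
      set g : C → ℕ := fun c1 =>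
        if h : ∃ n, CCAtom.control o c1 ∈ F^[n] ∅ then h.choose else 0 with hg
      refine Set.mem_iUnion.2 ⟨T.sup g + 1, ?_⟩
      rw [Function.iterate_succ_apply']
      refine Or.inr ⟨o, c2, T, hT, fun c1 h1 => ⟨?_, (hall c1 h1).2⟩, rfl⟩
      have hh := hex c1 h1
      have hgc : CCAtom.control o c1 ∈ F^[g c1] ∅ := by
        simp only [hg, dif_pos hh]
        exact hh.choose_spec
      exact ccIter_mono owns pct (Finset.le_sup h1) hgc
  · refine Set.iUnion_subset fun n => ?_
    induction n with
    | zero => simp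
    | succ n ih =>
      rw [Function.iterate_succ_apply']
      exact subset_trans (ccStep_mono owns pct ih)
        (lfpSet_prefix (ccStep_mono owns pct))

/-- For every finite ownership database (`owns`, with
nonnegative percentages `pct`), the least model `M` of the company-control
program with the monotonic `msum` aggregate satisfies:

1. the `towns` atoms of `M` are exactly the running sums in which each
   controlled company `C1` contributes its shares of `C2` exactly once;
2. `control(o,c) ∈ M` iff `o` transitively owns more than `50%` of `c`'s
   shares (i.e. `(o,c)` is in the least fixpoint of transitive control);
3. `msum` being monotonic, `M` is computed by the standard semi-naive fixpoint
   iteration, with no stratification restriction: `M = ⋃ₙ stepⁿ(∅)`. -/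
theorem company_control_program_correct
    {C : Type} [Fintype C] (owns : C → C → Prop) (pct : C → C → ℚ)
    (hpos : ∀ c1 c2, owns c1 c2 → 0 ≤ pct c1 c2) :
    (∀ o c2 s, CCAtom.towns o c2 s ∈ lfpSet (ccStep owns pct) ↔
      ∃ T : Finset C, T.Nonempty ∧
        (∀ c1 ∈ T, CCAtom.control o c1 ∈ lfpSet (ccStep owns pct) ∧ owns c1 c2) ∧
        s = ∑ c1 ∈ T, pct c1 c2) ∧
    (∀ o c, CCAtom.control o c ∈ lfpSet (ccStep owns pct) ↔
      (o, c) ∈ lfpSet (tcStep owns pct)) ∧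
    lfpSet (ccStep owns pct) = ⋃ n : ℕ, (ccStep owns pct)^[n] ∅ := by
  classical
  set M := lfpSet (ccStep owns pct) with hM
  have hfix : ccStep owns pct M = M := lfpSet_fixed (ccStep_mono owns pct)
  set N := lfpSet (tcStep owns pct) with hN
  have hNfix : tcStep owns pct N = N := lfpSet_fixed (tcStep_mono owns pct hpos)
  refine ⟨?_, ?_, ccKleene owns pct⟩
  · -- Part 1: towns atoms characterization
    intro o c2 s
    constructor
    · intro hm
      rw [← hfix] at hm
      rcases hm with (h | h) | h
      · obtain ⟨_, _, _, heq⟩ := h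
        exact (nomatch heq)
      · obtain ⟨_, _, _, _, _, heq⟩ := h
        exact (nomatch heq)
      · obtain ⟨o', c2', T, hT, hall, heq⟩ := h
        injection heq with h1 h2 h3
        subst h1; subst h2; subst h3
        exact ⟨T, hT, hall, rfl⟩
    · rintro ⟨T, hT, hall, rfl⟩
      rw [← hfix]
      exact Or.inr ⟨o, c2, T, hT, hall, rfl⟩
  · -- Part 2: control atoms = transitive control
    intro o c
    constructor
    · -- forward: control atoms of M map into N
      intro hm
      set M' : Set (CCAtom C) :=
        {a | (∀ o' c', a = CCAtom.control o' c' → (o', c') ∈ N) ∧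
             (∀ o' c2' s', a = CCAtom.towns o' c2' s' →
               ∃ T : Finset C, T.Nonempty ∧
                 (∀ c1 ∈ T, (o', c1) ∈ N ∧ owns c1 c2') ∧
                 s' = ∑ c1 ∈ T, pct c1 c2')} with hM'
      have hpre : ccStep owns pct M' ⊆ M' := by
        intro a ha
        rcases ha with (h | h) | h
        · obtain ⟨c', c2', how, rfl⟩ := h
          constructor
          · intro o2 c3 heq
            injection heq with h1 h2
            subst h1; subst h2
            rw [← hNfix]
            exact Or.inl ⟨⟨c2', how⟩, rfl⟩
          · intro _ _ _ heq; exact nomatch heq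
        · obtain ⟨o', c', s', hmem, hs, rfl⟩ := h
          constructor
          · intro o2 c3 heq
            injection heq with h1 h2
            subst h1; subst h2
            obtain ⟨T, hT, hall, hsum⟩ := hmem.2 o' c' s' rfl
            rw [← hNfix]
            refine Or.inr ⟨Finset.univ.filter (fun c1 => (o', c1) ∈ N ∧ owns c1 c'),
              fun c1 => by simp, ?_⟩
            have hsub : T ⊆ Finset.univ.filter (fun c1 => (o', c1) ∈ N ∧ owns c1 c') := by
              intro c1 h1
              simp only [Finset.mem_filter, Finset.mem_univ, true_and]
              exact hall c1 h1
            have : (50 : ℚ) < ∑ c1 ∈ T, pct c1 c' := by rw [← hsum]; exact hs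
            refine lt_of_lt_of_le this (Finset.sum_le_sum_of_subset_of_nonneg hsub ?_)
            intro c1 h1 _
            exact hpos _ _ (Finset.mem_filter.1 h1).2.2
          · intro _ _ _ heq; exact nomatch heq
        · obtain ⟨o', c2', T, hT, hall, rfl⟩ := h
          constructor
          · intro _ _ heq; exact nomatch heq
          · intro o2 c3 s3 heq
            injection heq with h1 h2 h3
            subst h1; subst h2; subst h3
            exact ⟨T, hT, fun c1 h1 =>
              ⟨(hall c1 h1).1.1 o' c1 rfl, (hall c1 h1).2⟩, rfl⟩
      have := lfpSet_le hpre hm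
      exact this.1 o c rfl
    · -- backward: N maps into control atoms of M
      intro hn
      set S' : Set (C × C) := {p | CCAtom.control p.1 p.2 ∈ M} with hS'
      have hpre : tcStep owns pct S' ⊆ S' := by
        intro p hp
        rcases hp with h | h
        · obtain ⟨⟨c2', how⟩, heq⟩ := h
          show CCAtom.control p.1 p.2 ∈ M
          rw [← heq, ← hfix]
          exact Or.inl (Or.inl ⟨p.1, c2', how, rfl⟩)
        · obtain ⟨T, hT, hsum⟩ := h
          have hTne : T.Nonempty := by
            rcases T.eq_empty_or_nonempty with rfl | hne
            · simp at hsum; linarith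
            · exact hne
          have htowns : CCAtom.towns p.1 p.2 (∑ c1 ∈ T, pct c1 p.2) ∈ M := by
            rw [← hfix]
            exact Or.inr ⟨p.1, p.2, T, hTne,
              fun c1 h1 => ((hT c1).1 h1), rfl⟩
          show CCAtom.control p.1 p.2 ∈ M
          rw [← hfix]
          exact Or.inl (Or.inr ⟨p.1, p.2, _, htowns, hsum, rfl⟩)
      exact lfpSet_le hpre hn
end
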